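/- arXiv:0906.4396 — 2 statements merged into one kernel-verified Lean document; each statement's English description precedes it below -/
import Mathlib

section
/- Let R be a commutative ring, ≺ a monomial ordering on the standard monomial basis B of R⟨X₁,…,Xₙ⟩, and G a monic Gröbner basis of the ideal I = ⟨G⟩. Then every nonzero f ∈ R⟨X₁,…,Xₙ⟩ can be written as a finite sum f = Σ λ_{ij} s_{ij} g_i w_{ij} + r, where λ_{ij} ∈ R, s_{ij}, w_{ij} ∈ B, g_i ∈ G, LM(s_{ij} g_i w_{ij}) ≼ LM(f) whenever λ_{ij} ≠ 0, and r lies in the R-span of the set N(G) of normal monomials; moreover, the element r is uniquely determined by f (independent of the chosen expression of this shape), and f ∈ I if and only if r = 0. -/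
noncomputable section
open MonoidAlgebra
open scoped Classical

/-- Words in the alphabet `X_1, ..., X_n`: the standard monomial basis `B`. -/
abbrev Word (n : ℕ) : Type := FreeMonoid (Fin n)

/-- The free `R`-algebra `R⟨X_1, ..., X_n⟩`, realized as the monoid algebra of the
free monoid on `n` letters over `R`. -/
abbrev FreeAlg (R : Type) [CommRing R] (n : ℕ) : Type := MonoidAlgebra R (Word n)

variable {R : Type} [CommRing R] {n : ℕ}

/-- The monomial (word) `w` viewed as an element of the free algebra. -/
def mono (R : Type) [CommRing R] {n : ℕ} (w : Word n) : FreeAlg R n :=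
  MonoidAlgebra.of R (Word n) w

/-- A monomial ordering: a well-ordering on words compatible with two-sided multiplication. -/
def IsMonomialOrder (n : ℕ) [LinearOrder (Word n)] : Prop :=
  WellFoundedLT (Word n) ∧ ∀ w u v s : Word n, u < v → w * u * s < w * v * s

/-- The leading monomial of `f` (with junk value `1` for `f = 0`). -/
def LMon [LinearOrder (Word n)] (f : FreeAlg R n) : Word n :=
  if h : f = 0 then 1 else f.coeff.support.max'
    (Finsupp.support_nonempty_iff.mpr (fun h' => h (MonoidAlgebra.coeff_eq_zero.mp h')))

/-- The leading coefficient of `f`. -/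
def LCoef [LinearOrder (Word n)] (f : FreeAlg R n) : R := f.coeff (LMon f)

/-- `f` is monic: it is nonzero and its leading coefficient is `1`. -/
def IsMonic [LinearOrder (Word n)] (f : FreeAlg R n) : Prop := f ≠ 0 ∧ LCoef f = 1

/-- `v` divides `u` as words: `u = w * v * s` for some words `w, s`. -/
def MDvd {n : ℕ} (v u : Word n) : Prop := ∃ w s : Word n, u = w * v * s

/-- `G` is a monic Gröbner basis of the two-sided ideal `I`: every element of `G` is monic,
and the leading monomial of every nonzero element of `I` is divisible by the leading
monomial of some element of `G`. -/
def IsMonicGB [LinearOrder (Word n)] (G : Set (FreeAlg R n))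
    (I : TwoSidedIdeal (FreeAlg R n)) : Prop :=
  (∀ g ∈ G, IsMonic g) ∧ ∀ f ∈ I, f ≠ 0 → ∃ g ∈ G, MDvd (LMon g) (LMon f)

/-- The set `N(G)` of normal words modulo `G`: words not divisible by any `LM(g)`, `g ∈ G`. -/
def NormalWords [LinearOrder (Word n)] (G : Set (FreeAlg R n)) : Set (Word n) :=
  {u | ∀ g ∈ G, ¬ MDvd (LMon g) u}

/-- `r` is a remainder of `f` upon division by `G`: `f = Σ cᵢ • (sᵢ * gᵢ * wᵢ) + r` with
`gᵢ ∈ G`, `LM(sᵢ gᵢ wᵢ) ≼ LM(f)` whenever `cᵢ ≠ 0`, and `r` in the `R`-span of the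
normal words `N(G)`. -/
def IsRem [LinearOrder (Word n)] (G : Set (FreeAlg R n)) (f r : FreeAlg R n) : Prop :=
  (∃ (k : ℕ) (c : Fin k → R) (s w : Fin k → Word n) (g : Fin k → FreeAlg R n),
    (∀ i, g i ∈ G) ∧
    f = (∑ i, c i • (mono R (s i) * g i * mono R (w i))) + r ∧
    ∀ i, c i ≠ 0 → LMon (mono R (s i) * g i * mono R (w i)) ≤ LMon f) ∧
  r ∈ Submodule.span R (mono R '' NormalWords G)


section AuxLemmas
variable [LinearOrder (Word n)]

omit [LinearOrder (Word n)] in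
lemma mono_eq_single (w : Word n) : mono R w = MonoidAlgebra.single w 1 := rfl

lemma lmon_eq (f : FreeAlg R n) (hf : f ≠ 0) :
    LMon f = f.coeff.support.max'
      (Finsupp.support_nonempty_iff.mpr (fun h' => hf (MonoidAlgebra.coeff_eq_zero.mp h'))) := by
  rw [LMon, dif_neg hf]

lemma lmon_mem_support (f : FreeAlg R n) (hf : f ≠ 0) : LMon f ∈ f.coeff.support := by
  rw [lmon_eq f hf]; exact Finset.max'_mem _ _

lemma le_lmon {f : FreeAlg R n} (hf : f ≠ 0) {b : Word n} (hb : b ∈ f.coeff.support) : b ≤ LMon f := by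
  rw [lmon_eq f hf]; exact Finset.le_max' _ _ hb

lemma lcoef_ne_zero {f : FreeAlg R n} (hf : f ≠ 0) : f.coeff (LMon f) ≠ 0 :=
  Finsupp.mem_support_iff.mp (lmon_mem_support f hf)

omit [LinearOrder (Word n)] in
lemma sandwich_single (s b w : Word n) (c : R) :
    mono R s * (MonoidAlgebra.single b c : FreeAlg R n) * mono R w
      = MonoidAlgebra.single (s*b*w) c := by
  show MonoidAlgebra.single s 1 * MonoidAlgebra.single b c * MonoidAlgebra.single w 1 = _
  rw [MonoidAlgebra.single_mul_single, MonoidAlgebra.single_mul_single, one_mul, mul_one]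

omit [LinearOrder (Word n)] in
lemma sandwich (s w : Word n) (g : FreeAlg R n) :
    (mono R s * g * mono R w).coeff = Finsupp.mapDomain (fun b => s * b * w) g.coeff := by
  induction g using MonoidAlgebra.induction_linear with
  | zero => simp [Finsupp.mapDomain_zero]
  | add f h hf hh => rw [mul_add, add_mul, MonoidAlgebra.coeff_add, MonoidAlgebra.coeff_add, hf, hh, Finsupp.mapDomain_add]
  | single b c => rw [sandwich_single, MonoidAlgebra.coeff_single, MonoidAlgebra.coeff_single, Finsupp.mapDomain_single]

lemma coef_sandwich (hord : IsMonomialOrder n) (s w b : Word n) (g : FreeAlg R n) :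
    (mono R s * g * mono R w).coeff (s * b * w) = g.coeff b := by
  have hsm : StrictMono (fun b : Word n => s * b * w) := fun u v h => hord.2 s u v w h
  rw [sandwich]; exact Finsupp.mapDomain_apply hsm.injective g.coeff b

lemma support_sandwich (hord : IsMonomialOrder n) (s w : Word n) (g : FreeAlg R n) :
    (mono R s * g * mono R w).coeff.support = g.coeff.support.image (fun b => s * b * w) := by
  have hsm : StrictMono (fun b : Word n => s * b * w) := fun u v h => hord.2 s u v w h
  rw [sandwich]; exact Finsupp.mapDomain_support_of_injective hsm.injective g.coeff

lemma sandwich_ne_zero (hord : IsMonomialOrder n) (s w : Word n) {g : FreeAlg R n}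
    (hg : g ≠ 0) : mono R s * g * mono R w ≠ 0 := by
  intro h
  have h2 := coef_sandwich hord s w (LMon g) g
  apply lcoef_ne_zero hg
  rw [← h2, h]
  rfl

lemma lmon_sandwich (hord : IsMonomialOrder n) (s w : Word n) {g : FreeAlg R n}
    (hg : g ≠ 0) : LMon (mono R s * g * mono R w) = s * LMon g * w := by
  have hsm : StrictMono (fun b : Word n => s * b * w) := fun u v h => hord.2 s u v w h
  have hne := sandwich_ne_zero hord s w hg
  apply le_antisymm
  · have hm := lmon_mem_support _ hne
    rw [support_sandwich hord] at hm
    obtain ⟨b, hb, hbe⟩ := Finset.mem_image.mp hm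
    rw [← hbe]
    exact hsm.monotone (le_lmon hg hb)
  · apply le_lmon hne
    rw [Finsupp.mem_support_iff, coef_sandwich hord]
    exact lcoef_ne_zero hg

lemma lmon_lt {f : FreeAlg R n} {u : Word n} (hf : f ≠ 0)
    (hle : ∀ b ∈ f.coeff.support, b ≤ u) (hu : f.coeff u = 0) : LMon f < u := by
  rcases (hle _ (lmon_mem_support f hf)).lt_or_eq with h | h
  · exact h
  · exact absurd (h ▸ hu) (lcoef_ne_zero hf)

/-- Membership in the span of normal monomials means the support consists of normal words. -/
lemma mem_normal_span_iff (G : Set (FreeAlg R n)) (r : FreeAlg R n) :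
    r ∈ Submodule.span R (mono R '' NormalWords G) ↔
      ∀ b ∈ r.coeff.support, b ∈ NormalWords G := by
  constructor
  · intro h
    induction h using Submodule.span_induction with
    | mem x hx =>
      obtain ⟨u, hu, rfl⟩ := hx
      intro b hb
      rw [mono_eq_single, MonoidAlgebra.coeff_single] at hb
      rw [Finset.mem_singleton.mp (Finsupp.support_single_subset hb)]
      exact hu
    | zero => intro b hb; simp at hb
    | add x y _ _ hx hy =>
      intro b hb
      rw [MonoidAlgebra.coeff_add] at hb
      rcases Finset.mem_union.mp (Finsupp.support_add hb) with h | h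
      · exact hx b h
      · exact hy b h
    | smul a x _ hx =>
      intro b hb
      rw [MonoidAlgebra.coeff_smul] at hb
      exact hx b (Finsupp.support_smul hb)
  · intro h
    rw [← MonoidAlgebra.sum_coeff_single r, Finsupp.sum]
    refine Submodule.sum_mem _ (fun b hb => ?_)
    have : MonoidAlgebra.single b (r.coeff b) = r.coeff b • mono R b := by
      rw [mono_eq_single, MonoidAlgebra.smul_single', mul_one]
    rw [this]
    exact Submodule.smul_mem _ _ (Submodule.subset_span ⟨b, h b hb, rfl⟩)

omit [LinearOrder (Word n)] in
lemma smul_mem_tsi (I : TwoSidedIdeal (FreeAlg R n)) (c : R) {x : FreeAlg R n}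
    (hx : x ∈ I) : c • x ∈ I := by
  rw [Algebra.smul_def]; exact I.mul_mem_left _ _ hx

/-- A representation of `q` as a combination of triples from `G` with leading bound `u`. -/
def GRep (G : Set (FreeAlg R n)) (q : FreeAlg R n) (u : Word n) : Prop :=
  ∃ (k : ℕ) (c : Fin k → R) (s w : Fin k → Word n) (g : Fin k → FreeAlg R n),
    (∀ i, g i ∈ G) ∧
    q = (∑ i, c i • (mono R (s i) * g i * mono R (w i))) ∧
    ∀ i, c i ≠ 0 → LMon (mono R (s i) * g i * mono R (w i)) ≤ u

lemma GRep.zero (G : Set (FreeAlg R n)) (u : Word n) : GRep G 0 u :=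
  ⟨0, Fin.elim0, Fin.elim0, Fin.elim0, Fin.elim0, (fun i => i.elim0),
    by simp, fun i => i.elim0⟩

lemma GRep.mono_bound {G : Set (FreeAlg R n)} {q : FreeAlg R n} {u v : Word n}
    (h : GRep G q u) (huv : u ≤ v) : GRep G q v := by
  obtain ⟨k, c, s, w, g, hg, he, hb⟩ := h
  exact ⟨k, c, s, w, g, hg, he, fun i hi => (hb i hi).trans huv⟩

lemma GRep.cons {G : Set (FreeAlg R n)} {q : FreeAlg R n} {u : Word n}
    (h : GRep G q u) {c₀ : R} {s₀ w₀ : Word n} {g₀ : FreeAlg R n} (hg₀ : g₀ ∈ G)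
    (hb₀ : c₀ ≠ 0 → LMon (mono R s₀ * g₀ * mono R w₀) ≤ u) :
    GRep G (c₀ • (mono R s₀ * g₀ * mono R w₀) + q) u := by
  obtain ⟨k, c, s, w, g, hg, he, hb⟩ := h
  refine ⟨k + 1, Fin.cons c₀ c, Fin.cons s₀ s, Fin.cons w₀ w, Fin.cons g₀ g, ?_, ?_, ?_⟩
  · intro i; induction i using Fin.cases with
    | zero => simpa using hg₀
    | succ j => simpa using hg j
  · rw [Fin.sum_univ_succ]
    simp only [Fin.cons_zero, Fin.cons_succ]
    rw [he]
  · intro i; induction i using Fin.cases with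
    | zero => simpa using hb₀
    | succ j => simpa using hb j

lemma GRep.mem_span {G : Set (FreeAlg R n)} {q : FreeAlg R n} {u : Word n}
    (h : GRep G q u) : q ∈ TwoSidedIdeal.span G := by
  obtain ⟨k, c, s, w, g, hg, he, _⟩ := h
  rw [he]
  refine sum_mem (fun i _ => smul_mem_tsi _ _ ?_)
  exact (TwoSidedIdeal.span G).mul_mem_right _ _
    ((TwoSidedIdeal.span G).mul_mem_left _ _ (TwoSidedIdeal.subset_span (hg i)))

/-- An element of the ideal lying in the span of normal words is zero. -/
lemma normal_in_ideal_eq_zero {G : Set (FreeAlg R n)}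
    (hGB : IsMonicGB G (TwoSidedIdeal.span G)) {r : FreeAlg R n}
    (hrI : r ∈ TwoSidedIdeal.span G)
    (hrN : r ∈ Submodule.span R (mono R '' NormalWords G)) : r = 0 := by
  by_contra hr0
  obtain ⟨g, hgG, hdvd⟩ := hGB.2 r hrI hr0
  exact ((mem_normal_span_iff G r).mp hrN _ (lmon_mem_support r hr0)) g hgG hdvd

/-- Existence of remainders, by well-founded induction on the leading monomial. -/
lemma exists_rem (hord : IsMonomialOrder n) {G : Set (FreeAlg R n)}
    (hGB : IsMonicGB G (TwoSidedIdeal.span G)) :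
    ∀ u : Word n, ∀ f : FreeAlg R n, f ≠ 0 → LMon f = u →
      ∃ r, GRep G (f - r) (LMon f) ∧ r ∈ Submodule.span R (mono R '' NormalWords G) := by
  intro u
  induction u using (hord.1.wf.induction) with
  | _ x IH =>
  intro f hf hfx
  by_cases hdvd : ∃ g ∈ G, MDvd (LMon g) (LMon f)
  · obtain ⟨g, hgG, s0, w0, hde⟩ := hdvd
    have hgm := hGB.1 g hgG
    have hpl : LMon (mono R s0 * g * mono R w0) = LMon f := by
      rw [lmon_sandwich hord s0 w0 hgm.1, ← hde]
    have hpc : (mono R s0 * g * mono R w0).coeff (LMon f) = 1 := by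
      rw [hde, coef_sandwich hord]
      exact hgm.2
    have hf'lm : (f - f.coeff (LMon f) • (mono R s0 * g * mono R w0)).coeff (LMon f) = 0 := by
      rw [MonoidAlgebra.coeff_sub, Finsupp.sub_apply, MonoidAlgebra.coeff_smul, Finsupp.smul_apply, hpc, smul_eq_mul, mul_one, sub_self]
    have hsupp : ∀ b ∈ (f - f.coeff (LMon f) • (mono R s0 * g * mono R w0)).coeff.support,
        b ≤ LMon f := by
      intro b hb
      rw [MonoidAlgebra.coeff_sub] at hb
      rcases Finset.mem_union.mp (Finsupp.support_sub hb) with h | h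
      · exact le_lmon hf h
      · have hb2 : b ∈ (mono R s0 * g * mono R w0).coeff.support := by
            rw [MonoidAlgebra.coeff_smul] at h; exact Finsupp.support_smul h
        exact hpl ▸ le_lmon (sandwich_ne_zero hord s0 w0 hgm.1) hb2
    by_cases hf0 : f - f.coeff (LMon f) • (mono R s0 * g * mono R w0) = 0
    · refine ⟨0, ?_, Submodule.zero_mem _⟩
      have hfe : f - 0 = f.coeff (LMon f) • (mono R s0 * g * mono R w0) + 0 := by
        rw [sub_zero, add_zero]
        exact sub_eq_zero.mp hf0
      rw [hfe]
      exact (GRep.zero G _).cons hgG (fun _ => hpl.le)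
    · have hlt : LMon (f - f.coeff (LMon f) • (mono R s0 * g * mono R w0)) < LMon f :=
        lmon_lt hf0 hsupp hf'lm
      obtain ⟨r, hrep, hrs⟩ := IH _ (hfx ▸ hlt) _ hf0 rfl
      refine ⟨r, ?_, hrs⟩
      have habel : ∀ a b c : FreeAlg R n, a - c = b + (a - b - c) := by
        intro a b c; abel
      rw [habel f (f.coeff (LMon f) • (mono R s0 * g * mono R w0)) r]
      exact (hrep.mono_bound hlt.le).cons hgG (fun _ => hpl.le)
  · have hnorm : LMon f ∈ NormalWords G := fun g hgG hd => hdvd ⟨g, hgG, hd⟩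
    have hmm : mono R (LMon f) ∈ Submodule.span R (mono R '' NormalWords G) :=
      Submodule.subset_span ⟨LMon f, hnorm, rfl⟩
    have hf'lm : (f - f.coeff (LMon f) • mono R (LMon f)).coeff (LMon f) = 0 := by
      rw [MonoidAlgebra.coeff_sub, Finsupp.sub_apply, MonoidAlgebra.coeff_smul, Finsupp.smul_apply,
        mono_eq_single, MonoidAlgebra.coeff_single,
        Finsupp.single_eq_same, smul_eq_mul, mul_one, sub_self]
    have hsupp : ∀ b ∈ (f - f.coeff (LMon f) • mono R (LMon f)).coeff.support, b ≤ LMon f := by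
      intro b hb
      rw [MonoidAlgebra.coeff_sub] at hb
      rcases Finset.mem_union.mp (Finsupp.support_sub hb) with h | h
      · exact le_lmon hf h
      · have hb2 : b ∈ (mono R (LMon f)).coeff.support := by
            rw [MonoidAlgebra.coeff_smul] at h; exact Finsupp.support_smul h
        have hb3 := Finsupp.support_single_subset (a := LMon f) (b := (1:R)) hb2
        rw [Finset.mem_singleton] at hb3
        exact hb3.le
    by_cases hf0 : f - f.coeff (LMon f) • mono R (LMon f) = 0
    · refine ⟨f, ?_, ?_⟩
      · rw [sub_self]; exact GRep.zero G _
      · rw [sub_eq_zero.mp hf0]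
        exact Submodule.smul_mem _ _ hmm
    · have hlt : LMon (f - f.coeff (LMon f) • mono R (LMon f)) < LMon f :=
        lmon_lt hf0 hsupp hf'lm
      obtain ⟨r', hrep, hrs⟩ := IH _ (hfx ▸ hlt) _ hf0 rfl
      refine ⟨r' + f.coeff (LMon f) • mono R (LMon f), ?_, ?_⟩
      · have habel : ∀ a b c : FreeAlg R n, a - (c + b) = a - b - c := by
          intro a b c; abel
        rw [habel f (f.coeff (LMon f) • mono R (LMon f)) r']
        exact hrep.mono_bound hlt.le
      · exact Submodule.add_mem _ hrs (Submodule.smul_mem _ _ hmm)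

lemma isRem_iff {G : Set (FreeAlg R n)} {f r : FreeAlg R n} :
    IsRem G f r ↔ GRep G (f - r) (LMon f) ∧
      r ∈ Submodule.span R (mono R '' NormalWords G) := by
  constructor
  · rintro ⟨⟨k, c, s, w, g, hg, he, hb⟩, hr⟩
    exact ⟨⟨k, c, s, w, g, hg, sub_eq_iff_eq_add.mpr he, hb⟩, hr⟩
  · rintro ⟨⟨k, c, s, w, g, hg, he, hb⟩, hr⟩
    exact ⟨⟨k, c, s, w, g, hg, sub_eq_iff_eq_add.mp he, hb⟩, hr⟩

end AuxLemmas

/-- If `G` is a monic Gröbner basis of `I = ⟨G⟩`, then every nonzero `f`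
has a remainder upon division by `G`, the remainder is unique, and `f ∈ I` iff the
remainder is `0`. -/
theorem division_unique_remainder [LinearOrder (Word n)] (hord : IsMonomialOrder n)
    (G : Set (FreeAlg R n)) (hGB : IsMonicGB G (TwoSidedIdeal.span G))
    (f : FreeAlg R n) (hf : f ≠ 0) :
    (∃ r, IsRem G f r) ∧
    (∀ r r', IsRem G f r → IsRem G f r' → r = r') ∧
    (∀ r, IsRem G f r → (f ∈ TwoSidedIdeal.span G ↔ r = 0)) := by
  have hsub : ∀ r, IsRem G f r → f - r ∈ TwoSidedIdeal.span G := by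
    intro r hr
    exact ((isRem_iff.mp hr).1).mem_span
  refine ⟨?_, ?_, ?_⟩
  · obtain ⟨r, h1, h2⟩ := exists_rem hord hGB (LMon f) f hf rfl
    exact ⟨r, isRem_iff.mpr ⟨h1, h2⟩⟩
  · intro r r' hr hr'
    have hI : r - r' ∈ TwoSidedIdeal.span G := by
      have h : r - r' = (f - r') - (f - r) := by abel
      rw [h]
      exact sub_mem (hsub r' hr') (hsub r hr)
    have hN : r - r' ∈ Submodule.span R (mono R '' NormalWords G) :=
      Submodule.sub_mem _ (isRem_iff.mp hr).2 (isRem_iff.mp hr').2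
    exact sub_eq_zero.mp (normal_in_ideal_eq_zero hGB hI hN)
  · intro r hr
    constructor
    · intro hfI
      have hrI : r ∈ TwoSidedIdeal.span G := by
        have h : r = f - (f - r) := by abel
        rw [h]
        exact sub_mem hfI (hsub r hr)
      exact normal_in_ideal_eq_zero hGB hrI (isRem_iff.mp hr).2
    · intro hr0
      have h := hsub r hr
      rwa [hr0, sub_zero] at h
end
end

section
/- Let R be a commutative ring and equip the free algebra R⟨X₁,…,Xₙ⟩ with a weight ℕ-gradation determined by positive integer degrees deg Xᵢ = nᵢ. Let I be an ideal of R⟨X₁,…,Xₙ⟩ and J = ⟨LH(I)⟩ the ideal generated by the ℕ-leading homogeneous elements of I. Then for every nonzero homogeneous element h of R⟨X₁,…,Xₙ⟩, h ∈ J if and only if h = LH(f) for some nonzero f ∈ I; consequently LH(J) = LH(I). -/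
noncomputable section
open MonoidAlgebra
open scoped Classical

variable {R : Type} [CommRing R] {n : ℕ}

/-- The weight degree of a word, for the weights `deg Xᵢ = d i`. -/
def wdeg {n : ℕ} (d : Fin n → ℕ) (w : Word n) : ℕ := ((FreeMonoid.toList w).map d).sum

/-- The maximal weight degree occurring in `f`. -/
def maxdeg (d : Fin n → ℕ) (f : FreeAlg R n) : ℕ := f.coeff.support.sup (wdeg d)

/-- The ℕ-leading homogeneous element `LH(f)` of `f`: the sum of the terms of `f` of
maximal weight degree. -/
def LH (d : Fin n → ℕ) (f : FreeAlg R n) : FreeAlg R n :=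
  ∑ w ∈ f.coeff.support.filter (fun w => wdeg d w = maxdeg d f), MonoidAlgebra.single w (f.coeff w)

/-- The set `LH(S)` of leading homogeneous elements of the nonzero elements of `S`. -/
def LHset (d : Fin n → ℕ) (S : Set (FreeAlg R n)) : Set (FreeAlg R n) :=
  {x | ∃ f ∈ S, f ≠ 0 ∧ x = LH d f}

/-- An ℕ-graded monomial ordering with respect to the weights `d`: a monomial ordering
such that words of smaller degree are smaller. -/
def IsGradedMonomialOrder {n : ℕ} (d : Fin n → ℕ) [LinearOrder (Word n)] : Prop :=
  IsMonomialOrder n ∧ ∀ u v : Word n, wdeg d u < wdeg d v → u < v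

/-- `f` is homogeneous with respect to the weight gradation `d`. -/
def IsHomog {n : ℕ} (d : Fin n → ℕ) (f : FreeAlg R n) : Prop :=
  ∃ p : ℕ, ∀ w ∈ f.coeff.support, wdeg d w = p

namespace LHAux

variable (d : Fin n → ℕ)

lemma wdeg_mul (u v : Word n) : wdeg d (u * v) = wdeg d u + wdeg d v := by
  simp [wdeg, FreeMonoid.toList_mul]

/-- The weight-degree-`p` component of `f`. -/
def D (p : ℕ) (f : FreeAlg R n) : FreeAlg R n :=
  MonoidAlgebra.ofCoeff (Finsupp.filter (fun w => wdeg d w = p) f.coeff)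

lemma D_apply (p : ℕ) (f : FreeAlg R n) (u : Word n) :
    (D d p f).coeff u = if wdeg d u = p then f.coeff u else 0 := by
  classical
  rw [D, MonoidAlgebra.coeff_ofCoeff, Finsupp.filter_apply]

lemma le_maxdeg {f : FreeAlg R n} {u : Word n} (hu : u ∈ f.coeff.support) :
    wdeg d u ≤ maxdeg d f := Finset.le_sup hu

lemma D_add (p : ℕ) (f g : FreeAlg R n) : D d p (f + g) = D d p f + D d p g := by
  ext u; simp only [D_apply, MonoidAlgebra.coeff_add, Finsupp.add_apply]; split_ifs <;> simp

lemma D_neg (p : ℕ) (f : FreeAlg R n) : D d p (-f) = -D d p f := by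
  ext u; simp only [D_apply, MonoidAlgebra.coeff_neg, Finsupp.neg_apply]; split_ifs <;> simp

lemma D_zero (p : ℕ) : D d p (0 : FreeAlg R n) = 0 := by
  ext u; simp [D_apply]

lemma LH_eq_D (f : FreeAlg R n) : LH d f = D d (maxdeg d f) f := by
  classical
  ext u
  rw [D_apply, LH, MonoidAlgebra.coeff_sum, Finsupp.finset_sum_apply]
  simp only [MonoidAlgebra.coeff_single, Finsupp.single_apply]
  rw [Finset.sum_ite_eq' (f.coeff.support.filter fun w => wdeg d w = maxdeg d f) u fun w => f.coeff w]
  by_cases h2 : u ∈ f.coeff.support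
  · simp [Finset.mem_filter, h2]
  · have : f.coeff u = 0 := Finsupp.notMem_support_iff.mp h2
    simp [Finset.mem_filter, h2, this]

lemma exists_max {f : FreeAlg R n} (hf : f ≠ 0) :
    ∃ w ∈ f.coeff.support, wdeg d w = maxdeg d f := by
  obtain ⟨w, hw, hw2⟩ := Finset.exists_mem_eq_sup f.coeff.support
    (Finsupp.support_nonempty_iff.mpr (fun h' => hf (MonoidAlgebra.coeff_eq_zero.mp h'))) (wdeg d)
  exact ⟨w, hw, hw2.symm⟩

lemma LH_ne_zero {f : FreeAlg R n} (hf : f ≠ 0) : LH d f ≠ 0 := by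
  obtain ⟨w, hw, hweq⟩ := exists_max d hf
  intro h
  have := congrArg (fun g : FreeAlg R n => g.coeff w) h
  simp [LH_eq_D, D_apply, hweq, Finsupp.mem_support_iff.mp hw] at this

lemma maxdeg_eq_of (p : ℕ) {f : FreeAlg R n} (h1 : D d p f ≠ 0)
    (h2 : ∀ w ∈ f.coeff.support, wdeg d w ≤ p) : maxdeg d f = p := by
  obtain ⟨u, hu⟩ := Finsupp.ne_iff.mp (fun h => h1 (MonoidAlgebra.coeff_eq_zero.mp h))
  simp only [Finsupp.coe_zero, Pi.zero_apply] at hu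
  rw [D_apply] at hu
  by_cases hw : wdeg d u = p
  · have hus : u ∈ f.coeff.support := by
      rw [Finsupp.mem_support_iff]; simpa [hw] using hu
    exact le_antisymm (Finset.sup_le h2) (hw ▸ le_maxdeg d hus)
  · simp [hw] at hu

lemma eq_LH_of (p : ℕ) {f : FreeAlg R n} (h1 : D d p f ≠ 0)
    (h2 : ∀ w ∈ f.coeff.support, wdeg d w ≤ p) :
    f ≠ 0 ∧ maxdeg d f = p ∧ LH d f = D d p f := by
  have hf : f ≠ 0 := by rintro rfl; exact h1 (D_zero d p)
  have hm := maxdeg_eq_of d p h1 h2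
  exact ⟨hf, hm, by rw [LH_eq_D, hm]⟩

lemma D_eq_self {p : ℕ} {x : FreeAlg R n} (h : ∀ u, x.coeff u ≠ 0 → wdeg d u = p) :
    D d p x = x := by
  ext u
  rw [D_apply]
  by_cases hx : x.coeff u = 0
  · simp [hx]
  · simp [h u hx]

lemma single_mul_coeff (w : Word n) (c : R) (x : FreeAlg R n) (v : Word n) :
    (MonoidAlgebra.single w c * x).coeff (w * v) = c * x.coeff v :=
  MonoidAlgebra.coeff_single_mul_eq_mul_coeff v fun a _ =>
    ⟨fun h => mul_left_cancel h, fun h => by rw [h]⟩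

lemma single_mul_coeff_zero (w : Word n) (c : R) (x : FreeAlg R n) {u : Word n}
    (h : ¬∃ v, u = w * v) : (MonoidAlgebra.single w c * x).coeff u = 0 :=
  MonoidAlgebra.coeff_single_mul_of_forall_mul_ne c x (fun v hv => h ⟨v, hv.symm⟩)

lemma mul_single_coeff (w : Word n) (c : R) (x : FreeAlg R n) (v : Word n) :
    (x * MonoidAlgebra.single w c).coeff (v * w) = x.coeff v * c :=
  MonoidAlgebra.coeff_mul_single_eq_coeff_mul v fun a _ =>
    ⟨fun h => mul_right_cancel h, fun h => by rw [h]⟩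

lemma mul_single_coeff_zero (w : Word n) (c : R) (x : FreeAlg R n) {u : Word n}
    (h : ¬∃ v, u = v * w) : (x * MonoidAlgebra.single w c).coeff u = 0 :=
  MonoidAlgebra.coeff_mul_single_of_forall_mul_ne c x (fun v hv => h ⟨v, hv.symm⟩)

lemma D_single_mul (w : Word n) (c : R) (x : FreeAlg R n) {p : ℕ} (hp : wdeg d w ≤ p) :
    D d p (MonoidAlgebra.single w c * x) =
      MonoidAlgebra.single w c * D d (p - wdeg d w) x := by
  ext u
  rw [D_apply]
  by_cases h : ∃ v, u = w * v
  · obtain ⟨v, rfl⟩ := h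
    rw [single_mul_coeff, single_mul_coeff, D_apply, wdeg_mul, mul_ite, mul_zero]
    have hiff : (wdeg d w + wdeg d v = p) ↔ (wdeg d v = p - wdeg d w) := by omega
    simp only [hiff]
  · rw [single_mul_coeff_zero w c x h,
      single_mul_coeff_zero w c (D d (p - wdeg d w) x) h, ite_self]

lemma D_single_mul_zero (w : Word n) (c : R) (x : FreeAlg R n) {p : ℕ}
    (hp : p < wdeg d w) : D d p (MonoidAlgebra.single w c * x) = 0 := by
  ext u
  rw [D_apply]
  by_cases h : ∃ v, u = w * v
  · obtain ⟨v, rfl⟩ := h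
    have hne : wdeg d (w * v) ≠ p := by rw [wdeg_mul]; omega
    simp [hne]
  · simp [single_mul_coeff_zero w c x h]

lemma D_mul_single (w : Word n) (c : R) (x : FreeAlg R n) {p : ℕ} (hp : wdeg d w ≤ p) :
    D d p (x * MonoidAlgebra.single w c) =
      D d (p - wdeg d w) x * MonoidAlgebra.single w c := by
  ext u
  rw [D_apply]
  by_cases h : ∃ v, u = v * w
  · obtain ⟨v, rfl⟩ := h
    rw [mul_single_coeff, mul_single_coeff, D_apply, wdeg_mul, ite_mul, zero_mul]
    have hiff : (wdeg d v + wdeg d w = p) ↔ (wdeg d v = p - wdeg d w) := by omega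
    simp only [hiff]
  · rw [mul_single_coeff_zero w c x h,
      mul_single_coeff_zero w c (D d (p - wdeg d w) x) h, ite_self]

lemma D_mul_single_zero (w : Word n) (c : R) (x : FreeAlg R n) {p : ℕ}
    (hp : p < wdeg d w) : D d p (x * MonoidAlgebra.single w c) = 0 := by
  ext u
  rw [D_apply]
  by_cases h : ∃ v, u = v * w
  · obtain ⟨v, rfl⟩ := h
    have hne : wdeg d (v * w) ≠ p := by rw [wdeg_mul]; omega
    simp [hne]
  · simp [mul_single_coeff_zero w c x h]

lemma support_single_mul {w : Word n} {c : R} {x : FreeAlg R n} {u : Word n}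
    (h : (MonoidAlgebra.single w c * x).coeff u ≠ 0) : ∃ v, u = w * v ∧ x.coeff v ≠ 0 := by
  by_cases he : ∃ v, u = w * v
  · obtain ⟨v, rfl⟩ := he
    refine ⟨v, rfl, fun hx => h ?_⟩
    rw [single_mul_coeff, hx, mul_zero]
  · exact absurd (single_mul_coeff_zero w c x he) h

lemma support_mul_single {w : Word n} {c : R} {x : FreeAlg R n} {u : Word n}
    (h : (x * MonoidAlgebra.single w c).coeff u ≠ 0) : ∃ v, u = v * w ∧ x.coeff v ≠ 0 := by
  by_cases he : ∃ v, u = v * w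
  · obtain ⟨v, rfl⟩ := he
    refine ⟨v, rfl, fun hx => h ?_⟩
    rw [mul_single_coeff, hx, zero_mul]
  · exact absurd (mul_single_coeff_zero w c x he) h

variable (I : TwoSidedIdeal (FreeAlg R n))

/-- The set of degree-`p` leading homogeneous elements of `I`, together with `0`. -/
def V (p : ℕ) : Set (FreeAlg R n) :=
  {x | x = 0 ∨ ∃ f ∈ I, f ≠ 0 ∧ maxdeg d f = p ∧ LH d f = x}

lemma zero_mem_V (p : ℕ) : (0 : FreeAlg R n) ∈ V d I p := Or.inl rfl

lemma mem_V_of (p : ℕ) {x f : FreeAlg R n} (hf : f ∈ I) (hD : D d p f = x)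
    (hx : x ≠ 0) (h2 : ∀ w ∈ f.coeff.support, wdeg d w ≤ p) : x ∈ V d I p := by
  obtain ⟨h0, hm, hLH⟩ := eq_LH_of d p (hD ▸ hx) h2
  exact Or.inr ⟨f, hf, h0, hm, by rw [hLH, hD]⟩

lemma V_add {p : ℕ} {x y : FreeAlg R n} (hx : x ∈ V d I p) (hy : y ∈ V d I p) :
    x + y ∈ V d I p := by
  rcases hx with rfl | ⟨f, hfI, hf0, hfm, hfL⟩
  · simpa using hy
  rcases hy with rfl | ⟨g, hgI, hg0, hgm, hgL⟩
  · rw [add_zero]; exact Or.inr ⟨f, hfI, hf0, hfm, hfL⟩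
  by_cases hxy : x + y = 0
  · exact hxy ▸ zero_mem_V d I p
  refine mem_V_of d I p (I.add_mem hfI hgI) ?_ hxy ?_
  · rw [D_add, ← hfL, ← hgL, LH_eq_D d f, LH_eq_D d g, hfm, hgm]
  · intro w hw
    rw [MonoidAlgebra.coeff_add] at hw
    rcases Finset.mem_union.mp (Finsupp.support_add hw) with h | h
    · exact hfm ▸ le_maxdeg d h
    · exact hgm ▸ le_maxdeg d h

lemma V_neg {p : ℕ} {x : FreeAlg R n} (hx : x ∈ V d I p) : -x ∈ V d I p := by
  rcases hx with rfl | ⟨f, hfI, hf0, hfm, hfL⟩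
  · simpa using zero_mem_V d I p
  have hx0 : x ≠ 0 := hfL ▸ LH_ne_zero d hf0
  refine mem_V_of d I p (I.neg_mem hfI) ?_ (neg_ne_zero.mpr hx0) ?_
  · rw [D_neg, ← hfL, LH_eq_D d f, hfm]
  · intro w hw
    rw [MonoidAlgebra.coeff_neg, Finsupp.support_neg] at hw
    exact hfm ▸ le_maxdeg d hw

lemma V_singleL {q : ℕ} (w : Word n) (c : R) {x : FreeAlg R n} (hx : x ∈ V d I q) :
    MonoidAlgebra.single w c * x ∈ V d I (wdeg d w + q) := by
  rcases hx with rfl | ⟨f, hfI, hf0, hfm, hfL⟩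
  · simpa using zero_mem_V d I _
  by_cases h0 : MonoidAlgebra.single w c * x = 0
  · exact h0 ▸ zero_mem_V d I _
  refine mem_V_of d I _ (f := MonoidAlgebra.single w c * f) (I.mul_mem_left _ _ hfI) ?_ h0 ?_
  · rw [D_single_mul d w c f (Nat.le_add_right _ _), Nat.add_sub_cancel_left,
      ← hfL, LH_eq_D d f, hfm]
  · intro u hu
    obtain ⟨v, rfl, hv⟩ := support_single_mul (Finsupp.mem_support_iff.mp hu)
    rw [wdeg_mul]
    exact Nat.add_le_add_left (hfm ▸ le_maxdeg d (Finsupp.mem_support_iff.mpr hv)) _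

lemma V_singleR {q : ℕ} (w : Word n) (c : R) {x : FreeAlg R n} (hx : x ∈ V d I q) :
    x * MonoidAlgebra.single w c ∈ V d I (q + wdeg d w) := by
  rcases hx with rfl | ⟨f, hfI, hf0, hfm, hfL⟩
  · simpa using zero_mem_V d I _
  by_cases h0 : x * MonoidAlgebra.single w c = 0
  · exact h0 ▸ zero_mem_V d I _
  refine mem_V_of d I _ (f := f * MonoidAlgebra.single w c) (I.mul_mem_right _ _ hfI) ?_ h0 ?_
  · rw [D_mul_single d w c f (Nat.le_add_left _ _), Nat.add_sub_cancel,
      ← hfL, LH_eq_D d f, hfm]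
  · intro u hu
    obtain ⟨v, rfl, hv⟩ := support_mul_single (Finsupp.mem_support_iff.mp hu)
    rw [wdeg_mul]
    exact Nat.add_le_add_right (hfm ▸ le_maxdeg d (Finsupp.mem_support_iff.mpr hv)) _

/-- The set of elements all of whose homogeneous components lie in `V`. -/
def Kset : Set (FreeAlg R n) := {x | ∀ p, D d p x ∈ V d I p}

lemma Kset_zero : (0 : FreeAlg R n) ∈ Kset d I := by
  intro p
  rw [D_zero]
  exact zero_mem_V d I p

lemma Kset_add {x y : FreeAlg R n} (hx : x ∈ Kset d I) (hy : y ∈ Kset d I) :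
    x + y ∈ Kset d I := fun p => (D_add d p x y) ▸ V_add d I (hx p) (hy p)

lemma Kset_neg {x : FreeAlg R n} (hx : x ∈ Kset d I) : -x ∈ Kset d I := fun p =>
  (D_neg d p x) ▸ V_neg d I (hx p)

lemma Kset_singleL (w : Word n) (c : R) {x : FreeAlg R n} (hx : x ∈ Kset d I) :
    MonoidAlgebra.single w c * x ∈ Kset d I := by
  intro p
  by_cases h : wdeg d w ≤ p
  · rw [D_single_mul d w c x h]
    have := V_singleL d I w c (hx (p - wdeg d w))
    rwa [Nat.add_sub_cancel' h] at this
  · rw [D_single_mul_zero d w c x (by omega)]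
    exact zero_mem_V d I p

lemma Kset_singleR (w : Word n) (c : R) {x : FreeAlg R n} (hx : x ∈ Kset d I) :
    x * MonoidAlgebra.single w c ∈ Kset d I := by
  intro p
  by_cases h : wdeg d w ≤ p
  · rw [D_mul_single d w c x h]
    have := V_singleR d I w c (hx (p - wdeg d w))
    rwa [Nat.sub_add_cancel h] at this
  · rw [D_mul_single_zero d w c x (by omega)]
    exact zero_mem_V d I p

lemma Kset_sum {ι : Type} (s : Finset ι) (g : ι → FreeAlg R n)
    (h : ∀ i ∈ s, g i ∈ Kset d I) : ∑ i ∈ s, g i ∈ Kset d I := by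
  classical
  induction s using Finset.induction_on with
  | empty => simpa using Kset_zero d I
  | insert _ _ hni ih =>
    rw [Finset.sum_insert hni]
    exact Kset_add d I (h _ (Finset.mem_insert_self _ _))
      (ih fun i hi => h i (Finset.mem_insert_of_mem hi))

lemma Kset_mulL (a : FreeAlg R n) {x : FreeAlg R n} (hx : x ∈ Kset d I) :
    a * x ∈ Kset d I := by
  have ha : ∑ w ∈ a.coeff.support, MonoidAlgebra.single w (a.coeff w) = a :=
    MonoidAlgebra.sum_coeff_single a
  rw [← ha, Finset.sum_mul]
  exact Kset_sum d I _ _ fun w _ => Kset_singleL d I w (a.coeff w) hx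

lemma Kset_mulR (a : FreeAlg R n) {x : FreeAlg R n} (hx : x ∈ Kset d I) :
    x * a ∈ Kset d I := by
  have ha : ∑ w ∈ a.coeff.support, MonoidAlgebra.single w (a.coeff w) = a :=
    MonoidAlgebra.sum_coeff_single a
  rw [← ha, Finset.mul_sum]
  exact Kset_sum d I _ _ fun w _ => Kset_singleR d I w (a.coeff w) hx

/-- `Kset` as a two-sided ideal. -/
def Kideal : TwoSidedIdeal (FreeAlg R n) :=
  TwoSidedIdeal.mk' (Kset d I) (Kset_zero d I) (fun {x y} hx hy => Kset_add d I hx hy)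
    (fun {x} hx => Kset_neg d I hx)
    (fun {x y} hy => Kset_mulL d I x hy) (fun {x y} hx => Kset_mulR d I y hx)

lemma mem_Kideal {x : FreeAlg R n} : x ∈ Kideal d I ↔ x ∈ Kset d I :=
  TwoSidedIdeal.mem_mk' _ _ _ _ _ _ x

lemma wdeg_of_LH_ne {f : FreeAlg R n} {u : Word n} (hu : (LH d f).coeff u ≠ 0) :
    wdeg d u = maxdeg d f := by
  rw [LH_eq_D, D_apply] at hu
  by_contra h
  simp [h] at hu

lemma LH_mem_Kset {f : FreeAlg R n} (hf : f ∈ I) (h0 : f ≠ 0) :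
    LH d f ∈ Kset d I := by
  intro p
  by_cases hp : p = maxdeg d f
  · subst hp
    rw [D_eq_self d fun u hu => wdeg_of_LH_ne d hu]
    exact Or.inr ⟨f, hf, h0, rfl, rfl⟩
  · have hD : D d p (LH d f) = 0 := by
      ext u
      rw [D_apply]
      by_cases h : wdeg d u = p
      · have hz : (LH d f).coeff u = 0 := by
          by_contra hne
          exact hp ((h.symm.trans (wdeg_of_LH_ne d hne)))
        simp [h, hz]
      · simp [h]
    rw [hD]
    exact zero_mem_V d I p

lemma span_subset_Kset {x : FreeAlg R n}
    (hx : x ∈ TwoSidedIdeal.span (LHset d (I : Set (FreeAlg R n)))) :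
    x ∈ Kset d I := by
  have hsub : LHset d (I : Set (FreeAlg R n)) ⊆ (Kideal d I : Set (FreeAlg R n)) := by
    rintro y ⟨f, hfI, hf0, rfl⟩
    rw [SetLike.mem_coe, mem_Kideal]
    exact LH_mem_Kset d I hfI hf0
  have := TwoSidedIdeal.mem_span_iff.mp hx (Kideal d I) hsub
  rwa [mem_Kideal] at this

lemma LH_LH {f : FreeAlg R n} (hf : f ≠ 0) : LH d (LH d f) = LH d f := by
  have hne := LH_ne_zero d hf
  have hm : maxdeg d (LH d f) = maxdeg d f := by
    apply le_antisymm
    · exact Finset.sup_le fun u hu =>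
        le_of_eq (wdeg_of_LH_ne d (Finsupp.mem_support_iff.mp hu))
    · obtain ⟨u, hu⟩ := Finsupp.ne_iff.mp (fun h => hne (MonoidAlgebra.coeff_eq_zero.mp h))
      simp only [Finsupp.coe_zero, Pi.zero_apply] at hu
      exact (wdeg_of_LH_ne d hu) ▸ le_maxdeg d (Finsupp.mem_support_iff.mpr hu)
  rw [LH_eq_D d (LH d f), hm, D_eq_self d fun u hu => wdeg_of_LH_ne d hu]

end LHAux

/-- Let `J = ⟨LH(I)⟩`. A nonzero homogeneous element `h` lies in `J`
iff `h = LH(f)` for some nonzero `f ∈ I`; consequently `LH(J) = LH(I)`. -/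
theorem lh_ideal_homogeneous_membership (d : Fin n → ℕ) (hd : ∀ i, 0 < d i)
    (I : TwoSidedIdeal (FreeAlg R n)) :
    (∀ h : FreeAlg R n, h ≠ 0 → IsHomog d h →
      (h ∈ TwoSidedIdeal.span (LHset d (I : Set (FreeAlg R n))) ↔
        ∃ f ∈ I, f ≠ 0 ∧ LH d f = h)) ∧
    LHset d ((TwoSidedIdeal.span (LHset d (I : Set (FreeAlg R n))) :
        TwoSidedIdeal (FreeAlg R n)) : Set (FreeAlg R n)) =
      LHset d (I : Set (FreeAlg R n)) := by
  constructor
  · intro h hne hhom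
    constructor
    · intro hmem
      obtain ⟨p, hp⟩ := hhom
      have hK := LHAux.span_subset_Kset d I hmem p
      have hD : LHAux.D d p h = h :=
        LHAux.D_eq_self d fun u hu => hp u (Finsupp.mem_support_iff.mpr hu)
      rw [hD] at hK
      rcases hK with rfl | ⟨f, hfI, hf0, _, hLH⟩
      · exact absurd rfl hne
      · exact ⟨f, hfI, hf0, hLH⟩
    · rintro ⟨f, hfI, hf0, rfl⟩
      exact TwoSidedIdeal.subset_span ⟨f, hfI, hf0, rfl⟩
  · ext x
    constructor
    · rintro ⟨g, hgJ, hg0, rfl⟩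
      have hK := LHAux.span_subset_Kset d I (SetLike.mem_coe.mp hgJ) (maxdeg d g)
      rw [← LHAux.LH_eq_D] at hK
      rcases hK with h0 | ⟨f, hfI, hf0, _, hLH⟩
      · exact absurd h0 (LHAux.LH_ne_zero d hg0)
      · exact ⟨f, hfI, hf0, hLH.symm⟩
    · rintro ⟨f, hfI, hf0, rfl⟩
      refine ⟨LH d f, ?_, LHAux.LH_ne_zero d hf0, (LHAux.LH_LH d hf0).symm⟩
      exact TwoSidedIdeal.subset_span ⟨f, hfI, hf0, rfl⟩
end
end
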